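/- The formal power series ∑_{n=1}^∞ μ(n) z^n ∈ ℤ[[z]] is not a rational function over ℤ[z]. -/

import Mathlib

open Finset Polynomial ArithmeticFunction

private lemma mu_mem (n : ℕ) :
    (moebius n : ℤ) ∈ ({-1, 0, 1} : Set ℤ) := by
  by_cases h : Squarefree n
  · rw [moebius_apply_of_squarefree h]
    rcases neg_one_pow_eq_or ℤ (cardFactors n) with h1 | h1 <;> simp [h1]
  · simp [moebius_eq_zero_of_not_squarefree h]

theorem stmt_12 :
    ¬ ∃ p q : Polynomial ℤ, q ≠ 0 ∧
      (q : PowerSeries ℤ) * (PowerSeries.mk fun n =>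
        (ArithmeticFunction.moebius n : ℤ)) = (p : PowerSeries ℤ) := by
  rintro ⟨p, q, hq, h⟩
  set a : ℕ → ℤ := fun n => (moebius n : ℤ) with ha
  set t := q.natTrailingDegree with ht
  set W := q.natDegree with hW
  have htW : t ≤ W := q.natTrailingDegree_le_natDegree
  have hc : q.coeff t ≠ 0 := by
    have := Polynomial.trailingCoeff_nonzero_iff_nonzero.mpr hq
    rwa [Polynomial.trailingCoeff] at this
  set N := max W (p.natDegree + 1) with hN
  -- the linear recurrence
  have hrec : ∀ n, N ≤ n →
      ∑ i ∈ Finset.range (W + 1), q.coeff i * a (n + t - i) = 0 := by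
    intro n hn
    have h1 := congrArg (PowerSeries.coeff (n + t)) h
    rw [PowerSeries.coeff_mul, Finset.Nat.sum_antidiagonal_eq_sum_range_succ_mk] at h1
    simp only [Polynomial.coeff_coe, PowerSeries.coeff_mk] at h1
    have hp0 : p.coeff (n + t) = 0 :=
      Polynomial.coeff_eq_zero_of_natDegree_lt (by omega)
    rw [hp0] at h1
    rw [← h1]
    apply Finset.sum_subset (Finset.range_subset_range.mpr (by omega))
    intro k _ hk
    rw [Finset.mem_range, not_lt] at hk
    rw [Polynomial.coeff_eq_zero_of_natDegree_lt (by omega), zero_mul]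
  -- pigeonhole
  obtain ⟨n1, hn1, n2, hn2, hne, heq⟩ :=
    Set.Infinite.exists_ne_map_eq_of_mapsTo
      (f := fun n => fun i : Fin (W + 1) => a (n + i))
      (t := Set.pi Set.univ fun _ : Fin (W + 1) => ({-1, 0, 1} : Set ℤ))
      (Set.Ici_infinite N) (fun n _ => fun i _ => mu_mem (n + i))
      (Set.Finite.pi fun _ => Set.toFinite _)
  wlog hlt : n1 < n2 generalizing n1 n2
  · exact this n2 hn2 n1 hn1 hne.symm heq.symm (by omega)
  set T := n2 - n1 with hT
  have hTpos : 0 < T := by omega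
  have heq' : ∀ i : ℕ, i < W + 1 → a (n1 + i) = a (n1 + i + T) := by
    intro i hi
    have := congrFun heq ⟨i, hi⟩
    simp only at this
    rw [this]
    congr 1
    omega
  have hn1N : N ≤ n1 := hn1
  -- periodicity from n1 on
  have key : ∀ i : ℕ, a (n1 + i) = a (n1 + i + T) := by
    intro i
    induction i using Nat.strong_induction_on with
    | _ i IH =>
      by_cases hi : i < W + 1
      · exact heq' i hi
      · push_neg at hi
        have h1 := hrec (n1 + i) (by omega)
        have h2 := hrec (n1 + i + T) (by omega)
        have h3 : ∑ k ∈ Finset.range (W + 1),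
            (q.coeff k * a (n1 + i + t - k) - q.coeff k * a (n1 + i + T + t - k))
            = q.coeff t * a (n1 + i) - q.coeff t * a (n1 + i + T) := by
          rw [Finset.sum_eq_single_of_mem t (by simp; omega)]
          · congr 2 <;> congr 1 <;> omega
          · intro k hk hkt
            rcases lt_or_gt_of_ne hkt with hklt | hkgt
            · rw [Polynomial.coeff_eq_zero_of_lt_natTrailingDegree hklt]; ring
            · have hk' : k ≤ W := by
                rw [Finset.mem_range] at hk; omega
              have hidx : n1 + i + t - k = n1 + (i + t - k) := by omega
              have hidx2 : n1 + i + T + t - k = n1 + (i + t - k) + T := by omega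
              rw [hidx, hidx2, IH (i + t - k) (by omega)]
              ring
        rw [Finset.sum_sub_distrib, h1, h2, sub_zero] at h3
        have h4 : q.coeff t * a (n1 + i) = q.coeff t * a (n1 + i + T) := by linarith
        exact mul_left_cancel₀ hc h4
  have per : ∀ m, n1 ≤ m → ∀ j : ℕ, a (m + j * T) = a m := by
    intro m hm j
    induction j with
    | zero => simp
    | succ j IH =>
      have hk := key (m + j * T - n1)
      rw [show n1 + (m + j * T - n1) = m + j * T from by omega] at hk
      rw [show m + (j + 1) * T = m + j * T + T from by ring, ← hk, IH]
  -- construct contradiction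
  obtain ⟨P, hPge, hP⟩ := Nat.exists_infinite_primes (n1 + 1)
  obtain ⟨r, hrge, hr⟩ := Nat.exists_infinite_primes (T + 2)
  have hcop : Nat.Coprime T (r ^ 2) := by
    apply Nat.Coprime.pow_right
    rw [Nat.coprime_comm, Nat.Prime.coprime_iff_not_dvd hr]
    intro hdvd
    have := Nat.le_of_dvd hTpos hdvd
    omega
  haveI : NeZero (r ^ 2) := ⟨pow_ne_zero _ hr.pos.ne'⟩
  have hTu : IsUnit ((T : ℕ) : ZMod (r ^ 2)) :=
    (ZMod.isUnit_iff_coprime T (r ^ 2)).mpr hcop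
  set x : ZMod (r ^ 2) := (↑(hTu.unit⁻¹) : ZMod (r ^ 2)) * (-(P : ZMod (r ^ 2))) with hx
  set k := x.val with hk
  have hxk : ((k : ℕ) : ZMod (r ^ 2)) = x := by
    rw [hk, ZMod.natCast_val, ZMod.cast_id]
  have hzero : ((P + k * T : ℕ) : ZMod (r ^ 2)) = 0 := by
    push_cast
    rw [hxk, hx]
    have h0 : (↑(hTu.unit⁻¹) : ZMod (r ^ 2)) * (T : ZMod (r ^ 2)) = 1 :=
      hTu.val_inv_mul
    calc (P : ZMod (r ^ 2)) + (↑(hTu.unit⁻¹) : ZMod (r ^ 2)) * (-(P : ZMod (r ^ 2))) * (T : ZMod (r ^ 2))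
        = (P : ZMod (r ^ 2)) + ((↑(hTu.unit⁻¹) : ZMod (r ^ 2)) * (T : ZMod (r ^ 2))) * (-(P : ZMod (r ^ 2))) := by
          ring
      _ = 0 := by rw [h0]; ring
  have hdvd : r ^ 2 ∣ P + k * T := (ZMod.natCast_eq_zero_iff _ _).mp hzero
  have hnsqf : ¬ Squarefree (P + k * T) := by
    intro hs
    have : IsUnit r := hs r (by rwa [← sq])
    exact hr.one_lt.ne' (Nat.isUnit_iff.mp this)
  have hval0 : a (P + k * T) = 0 := by
    simp [ha, moebius_eq_zero_of_not_squarefree hnsqf]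
  have hvalP : a P = -1 := by
    simp [ha, moebius_apply_prime hP]
  have := per P (by omega) k
  rw [hval0, hvalP] at this
  exact absurd this (by norm_num)
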